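/- The skeleton map from DAGs to undirected graphs is invariant under Markov equivalence: if two DAGs induce the same d-separation relations, then they have the same skeleton. -/

import Mathlib

variable {V : Type*}

/-- Two nodes are adjacent in a directed graph if there is an edge in either direction. -/
def Adj (E : V → V → Prop) (a b : V) : Prop := E a b ∨ E b a

/-- A directed graph is acyclic if no vertex lies on a directed cycle. -/
def Acyclic (E : V → V → Prop) : Prop := ∀ v, ¬ Relation.TransGen E v v

/-- `b` is a descendant of `a` (including `a` itself): there is a directed path from
`a` to `b`. -/
def Descendant (E : V → V → Prop) (a b : V) : Prop := Relation.ReflTransGen E a b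

/-- The set of parents of a node. -/
def Parents (E : V → V → Prop) (v : V) : Set V := {u | E u v}

/-- A list of vertices is a trail (an undirected path) if consecutive vertices are
adjacent in the skeleton. -/
def IsTrail (E : V → V → Prop) : List V → Prop
  | [] => False
  | [_] => True
  | a :: b :: l => Adj E a b ∧ IsTrail E (b :: l)

/-- In a consecutive triple `x, y, z` of a trail, the middle node `y` is a collider if
both edges point into it: `x → y ← z`. -/
def Collider (E : V → V → Prop) (x y z : V) : Prop := E x y ∧ E z y

/-- A consecutive triple `x, y, z` is blocked by the conditioning set `S` if either the
middle node is a collider and neither it nor any of its descendants lies in `S`, or the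
middle node is a non-collider lying in `S`. -/
def BlockedTriple (E : V → V → Prop) (S : Set V) (x y z : V) : Prop :=
  (Collider E x y z ∧ ∀ d, Descendant E y d → d ∉ S) ∨ (¬ Collider E x y z ∧ y ∈ S)

/-- A trail `p` is blocked by `S` if some consecutive triple of `p` is blocked by `S`. -/
def Blocked (E : V → V → Prop) (S : Set V) (p : List V) : Prop :=
  ∃ i x y z, p[(i : ℕ)]? = some x ∧ p[i + 1]? = some y ∧ p[i + 2]? = some z ∧
    BlockedTriple E S x y z

/-- `a` and `b` are d-separated by `S`: every (self-avoiding) trail from `a` to `b` is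
blocked by `S`. -/
def DSep (E : V → V → Prop) (S : Set V) (a b : V) : Prop :=
  ∀ p : List V, IsTrail E p → p.head? = some a → p.getLast? = some b → p.Nodup →
    Blocked E S p

section AuxLemmas

variable {V : Type*}

private lemma get?_getD' {l : List V} {i : ℕ} (h : i < l.length) (d : V) :
    l[i]? = some (l.getD i d) := by
  simp [List.getElem?_eq_getElem h]

private lemma isTrail_length_pos {E : V → V → Prop} {p : List V} (hp : IsTrail E p) :
    0 < p.length := by
  cases p with
  | nil => exact absurd hp id
  | cons a l => simp

private lemma isTrail_adj {E : V → V → Prop} {p : List V} (hp : IsTrail E p) (d : V) :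
    ∀ i, i + 1 < p.length → Adj E (p.getD i d) (p.getD (i + 1) d) := by
  induction p with
  | nil => intro i h; simp at h
  | cons a l ih =>
    intro i h
    cases l with
    | nil => simp at h
    | cons b l' =>
      obtain ⟨hab, ht⟩ := hp
      cases i with
      | zero => simpa [List.getD] using hab
      | succ i =>
        have := ih ht i (by simpa using h)
        simpa [List.getD] using this

private lemma chain_rtg {E : V → V → Prop} (f : ℕ → V) (n : ℕ) :
    ∀ j, j ≤ n → (∀ k, j ≤ k → k < n → E (f (k + 1)) (f k)) →
      Relation.ReflTransGen E (f n) (f j) := by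
  intro j hj hc
  obtain ⟨m, hd⟩ : ∃ m, n - j = m := ⟨_, rfl⟩
  induction m generalizing j with
  | zero =>
    have hjn : j = n := by omega
    subst hjn; exact .refl
  | succ m ih =>
    have hjn : j < n := by omega
    have h1 : Relation.ReflTransGen E (f n) (f (j + 1)) :=
      ih (j + 1) (by omega) (fun k hk hk' => hc k (by omega) hk') (by omega)
    exact h1.tail (hc j le_rfl hjn)

private lemma adj_not_dsep {E : V → V → Prop} {a b : V} (h : Adj E a b) (hne : a ≠ b)
    (S : Set V) : ¬ DSep E S a b := by
  intro hd
  have hbl := hd [a, b] ⟨h, trivial⟩ rfl (by simp) (by simp [hne])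
  obtain ⟨i, x, y, z, _, _, hz, _⟩ := hbl
  have : ([a, b] : List V)[i + 2]? = none := List.getElem?_eq_none_iff.mpr (by simp)
  rw [this] at hz
  exact absurd hz (by simp)

private lemma nonadj_dsep {E : V → V → Prop} (hac : Acyclic E) {a b : V}
    (hnadj : ¬ Adj E a b) (hnd : ¬ Descendant E b a) :
    DSep E (Parents E b) a b := by
  classical
  intro p hp hhead hlast _
  have hpos : 0 < p.length := isTrail_length_pos hp
  set n := p.length - 1 with hn
  have hget : ∀ i, i < p.length → p[i]? = some (p.getD i b) :=
    fun i h => get?_getD' h b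
  have hf0 : p.getD 0 b = a := by
    have h1 := hget 0 hpos
    have h2 : p[0]? = p.head? := by cases p <;> simp
    rw [h2, hhead] at h1
    exact (Option.some_inj.mp h1).symm
  have hfn : p.getD n b = b := by
    have h1 := hget n (by omega)
    rw [hn, ← List.getLast?_eq_getElem?, hlast] at h1
    exact (Option.some_inj.mp h1).symm
  have hne : a ≠ b := by
    intro h
    exact hnd (by rw [h]; exact Relation.ReflTransGen.refl)
  have hlen3 : 3 ≤ p.length := by
    by_contra h3
    push_neg at h3
    rcases (by omega : p.length = 1 ∨ p.length = 2) with h | h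
    · have hn0 : n = 0 := by omega
      rw [hn0] at hfn
      exact hne (hf0.symm.trans hfn)
    · have hn1 : n = 1 := by omega
      have := isTrail_adj hp b 0 (by omega)
      rw [hf0, show (0:ℕ) + 1 = n from by omega, hfn] at this
      exact hnadj this
  have hn2 : 2 ≤ n := by omega
  have hadj_last : Adj E (p.getD (n - 1) b) b := by
    have := isTrail_adj hp b (n - 1) (by omega)
    rwa [show n - 1 + 1 = n from by omega, hfn] at this
  rcases hadj_last with hyb | hby
  · -- last edge points into b : the second-to-last node is a non-collider in Parents b
    refine ⟨n - 2, p.getD (n - 2) b, p.getD (n - 1) b, b, hget (n - 2) (by omega), ?_, ?_, ?_⟩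
    · rw [show n - 2 + 1 = n - 1 from by omega]; exact hget (n - 1) (by omega)
    · rw [show n - 2 + 2 = n from by omega, hget n (by omega), hfn]
    · refine Or.inr ⟨?_, hyb⟩
      intro hcol
      exact hac b (Relation.TransGen.tail (Relation.TransGen.single hcol.2) hyb)
  · -- last edge points out of b : find the nearest collider, a descendant of b
    have hP : ∀ k, n - 1 ≤ k → k < n → E (p.getD (k + 1) b) (p.getD k b) := by
      intro k hk hk'
      have hkn : k = n - 1 := by omega
      subst hkn
      rwa [show n - 1 + 1 = n from by omega, hfn]
    have hex : ∃ i, ∀ k, i ≤ k → k < n → E (p.getD (k + 1) b) (p.getD k b) := ⟨n - 1, hP⟩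
    set i₀ := Nat.find hex with hi₀
    have hP₀ := Nat.find_spec hex
    have hle : i₀ ≤ n - 1 := Nat.find_le hP
    have hi0pos : 0 < i₀ := by
      rcases Nat.eq_zero_or_pos i₀ with h0 | h0
      · exfalso
        have := chain_rtg (fun i => p.getD i b) n 0 (by omega) (by rw [← h0]; exact hP₀)
        simp only [hfn, hf0] at this
        exact hnd this
      · exact h0
    have hnotP := Nat.find_min hex (show i₀ - 1 < i₀ by omega)
    push_neg at hnotP
    obtain ⟨k, hk1, hk2, hk3⟩ := hnotP
    have hki : k = i₀ - 1 := by
      by_contra hk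
      exact hk3 (hP₀ k (by omega) hk2)
    subst hki
    have hnE : ¬ E (p.getD i₀ b) (p.getD (i₀ - 1) b) := by
      rwa [show i₀ - 1 + 1 = i₀ from by omega] at hk3
    have hE1 : E (p.getD (i₀ - 1) b) (p.getD i₀ b) := by
      have := isTrail_adj hp b (i₀ - 1) (by omega)
      rw [show i₀ - 1 + 1 = i₀ from by omega] at this
      exact this.resolve_right hnE
    have hE2 : E (p.getD (i₀ + 1) b) (p.getD i₀ b) := hP₀ i₀ le_rfl (by omega)
    refine ⟨i₀ - 1, p.getD (i₀ - 1) b, p.getD i₀ b, p.getD (i₀ + 1) b,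
      hget (i₀ - 1) (by omega), ?_, ?_, ?_⟩
    · rw [show i₀ - 1 + 1 = i₀ from by omega]; exact hget i₀ (by omega)
    · rw [show i₀ - 1 + 2 = i₀ + 1 from by omega]; exact hget (i₀ + 1) (by omega)
    · refine Or.inl ⟨⟨hE1, hE2⟩, ?_⟩
      intro d hd hdS
      have hbc : Relation.ReflTransGen E b (p.getD i₀ b) := by
        have := chain_rtg (fun i => p.getD i b) n i₀ (by omega) hP₀
        simpa only [hfn] using this
      exact hac b (Relation.TransGen.tail' (hbc.trans hd) hdS)

private lemma adj_of_adj {V : Type*} (E₁ E₂ : V → V → Prop)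
    (hacyc₁ : Acyclic E₁) (hacyc₂ : Acyclic E₂)
    (hdsep : ∀ (S : Set V) (a b : V), DSep E₁ S a b → DSep E₂ S a b)
    {a b : V} (hne : a ≠ b) (h : Adj E₂ a b) : Adj E₁ a b := by
  by_contra hnadj
  have hone : ¬ Descendant E₁ b a ∨ ¬ Descendant E₁ a b := by
    by_contra hc
    push_neg at hc
    obtain ⟨h1, h2⟩ := hc
    have ht : Relation.TransGen E₁ b a := by
      rcases Relation.reflTransGen_iff_eq_or_transGen.mp h1 with he | ht
      · exact absurd he hne
      · exact ht
    exact hacyc₁ b (ht.trans_left h2)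
  rcases hone with hnd | hnd
  · have := hdsep (Parents E₁ b) a b (nonadj_dsep hacyc₁ hnadj hnd)
    exact adj_not_dsep h hne _ this
  · have hnadj' : ¬ Adj E₁ b a := fun h' => hnadj h'.symm
    have := hdsep (Parents E₁ a) b a (nonadj_dsep hacyc₁ hnadj' hnd)
    exact adj_not_dsep h.symm hne.symm _ this

end AuxLemmas

/-- The skeleton is invariant under Markov equivalence: if two DAGs on the same finite
vertex set induce the same d-separation relations, then they have the same skeleton
(the same adjacency relation obtained by forgetting edge directions). -/
theorem same_dsep_same_skeleton {V : Type*} [Fintype V] (E₁ E₂ : V → V → Prop)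
    (hacyc₁ : Acyclic E₁) (hacyc₂ : Acyclic E₂)
    (hdsep : ∀ (S : Set V) (a b : V), DSep E₁ S a b ↔ DSep E₂ S a b) :
    ∀ a b, Adj E₁ a b ↔ Adj E₂ a b := by
  intro a b
  by_cases hab : a = b
  · subst hab
    constructor <;> intro h
    · exact absurd (Relation.TransGen.single (h.elim id id)) (hacyc₁ a)
    · exact absurd (Relation.TransGen.single (h.elim id id)) (hacyc₂ a)
  · constructor
    · exact adj_of_adj E₂ E₁ hacyc₂ hacyc₁ (fun S x y => (hdsep S x y).mpr) hab
    · exact adj_of_adj E₁ E₂ hacyc₁ hacyc₂ (fun S x y => (hdsep S x y).mp) hab
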